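/- Consider Q = 3/4 and the unique V ∈ ℂ satisfying i·Q = V · conj((−3i)·(1 − V)); then V = 1/2 and the load impedance magnitude satisfies |V|²/Q = 1/3 = |1/(−3i)|, whereas |1/i + 1/(−3i)| = 2/3 ≠ 1/3. -/

import Mathlib

lemma key_sol (V : ℂ) (h : Complex.I * (3 / 4 : ℝ) =
    V * (starRingEnd ℂ) ((-3 * Complex.I) * (1 - V))) : V = 1 / 2 := by
  have h2 : (Complex.I * (3 / 4 : ℝ)).re = (V * (starRingEnd ℂ) ((-3 * Complex.I) * (1 - V))).re := by rw [h]
  have h3 : (Complex.I * (3 / 4 : ℝ)).im = (V * (starRingEnd ℂ) ((-3 * Complex.I) * (1 - V))).im := by rw [h]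
  simp [Complex.mul_re, Complex.mul_im, Complex.sub_re, Complex.sub_im] at h2 h3
  apply Complex.ext <;> simp
  · nlinarith [sq_nonneg (V.re - 1/2), sq_nonneg V.im]
  · nlinarith [sq_nonneg (V.re - 1/2), sq_nonneg V.im]

lemma key_eq : Complex.I * (3 / 4 : ℝ) =
    ((1:ℂ) / 2) * (starRingEnd ℂ) ((-3 * Complex.I) * (1 - 1/2)) := by
  simp [Complex.ext_iff]
  norm_num

theorem counterexample_two_bus :
    (∃! V : ℂ, Complex.I * (3 / 4 : ℝ) =
        V * (starRingEnd ℂ) ((-3 * Complex.I) * (1 - V))) ∧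
    (∀ V : ℂ, Complex.I * (3 / 4 : ℝ) =
        V * (starRingEnd ℂ) ((-3 * Complex.I) * (1 - V)) →
      V = 1 / 2 ∧
      ‖V‖ ^ 2 / (3 / 4 : ℝ) = 1 / 3 ∧
      (1 / 3 : ℝ) = ‖(1 / (-3 * Complex.I) : ℂ)‖ ∧
      ‖(1 / Complex.I + 1 / (-3 * Complex.I) : ℂ)‖ = 2 / 3 ∧
      (2 / 3 : ℝ) ≠ 1 / 3) := by
  constructor
  · exact ⟨1/2, key_eq, fun V h => key_sol V h⟩
  · intro V h
    have hV := key_sol V h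
    subst hV
    refine ⟨rfl, ?_, ?_, ?_, by norm_num⟩
    · norm_num [Complex.norm_def, Complex.normSq_apply]
    · rw [norm_div]
      norm_num [Complex.norm_def, Complex.normSq_apply]
    · have : 1 / Complex.I + 1 / (-3 * Complex.I) = -(2/3) * Complex.I := by
        field_simp
        ring_nf
        simp [Complex.I_sq]
      rw [this]
      simp [map_mul]
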